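/- Let (K,<) be a countable ordered field whose transcendence degree over ℚ is countably infinite. Then K admits a transcendence basis over ℚ that is dense in K with respect to the order topology. -/

import Mathlib

set_option maxHeartbeats 1000000
set_option synthInstance.maxHeartbeats 400000

open Polynomial in
/-- Transfer algebraicity along an injective ring hom commuting with the algebra maps. -/
theorem myIsAlgebraic_of_ringHom {E : Type*} [Field E] {A B : Type*} [CommRing A] [CommRing B]
    [Algebra A E] [Algebra B E] (f : A →+* B) (hf : Function.Injective f)
    (hcomm : ∀ a, algebraMap B E (f a) = algebraMap A E a) {x : E}
    (h : IsAlgebraic A x) : IsAlgebraic B x := by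
  obtain ⟨p, hp, hpx⟩ := h
  refine ⟨p.map f, fun h0 => hp (Polynomial.map_injective f hf (by simpa using h0)), ?_⟩
  rw [Polynomial.aeval_def, Polynomial.eval₂_map]
  rw [Polynomial.aeval_def] at hpx
  rw [show (algebraMap B E).comp f = algebraMap A E from RingHom.ext hcomm]
  exact hpx

/-- Monotonicity of algebraicity in the intermediate field. -/
theorem myIsAlgebraic_mono {F E : Type*} [Field F] [Field E] [Algebra F E]
    {N N' : IntermediateField F E} (h : N ≤ N') {x : E}
    (hx : IsAlgebraic N x) : IsAlgebraic N' x :=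
  myIsAlgebraic_of_ringHom (E := E) (IntermediateField.inclusion h).toRingHom
    (IntermediateField.inclusion_injective h) (fun _ => rfl) hx

theorem myAdjoinMono (F : Type*) {E : Type*} [Field F] [Field E] [Algebra F E] {A B : Set E}
    (h : A ⊆ B) : IntermediateField.adjoin F A ≤ IntermediateField.adjoin F B :=
  IntermediateField.adjoin_le_iff.2 (h.trans (IntermediateField.subset_adjoin F B))

/-- The intermediate field adjoin is a fraction field of the subalgebra adjoin. -/
theorem myBridge {F E : Type*} [Field F] [Field E] [Algebra F E] (S : Set E) (x : E) :
    IsAlgebraic (Algebra.adjoin F S) x ↔ IsAlgebraic (IntermediateField.adjoin F S) x := by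
  letI : Algebra (Algebra.adjoin F S) (IntermediateField.adjoin F S) :=
    (Subalgebra.inclusion (IntermediateField.algebra_adjoin_le_adjoin F S)).toRingHom.toAlgebra
  haveI : IsScalarTower (Algebra.adjoin F S) (IntermediateField.adjoin F S) E :=
    IsScalarTower.of_algebraMap_eq (congrFun rfl)
  have hcoe : ∀ zz : Algebra.adjoin F S,
      ((algebraMap (Algebra.adjoin F S) (IntermediateField.adjoin F S) zz :
        IntermediateField.adjoin F S) : E) = (zz : E) := fun _ => rfl
  haveI : IsFractionRing (Algebra.adjoin F S) (IntermediateField.adjoin F S) := by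
    refine ⟨⟨?_, ?_, ?_⟩⟩
    · rintro ⟨y, hy⟩
      have hy0 : y ≠ 0 := nonZeroDivisors.ne_zero hy
      rw [isUnit_iff_ne_zero]
      intro h0
      apply hy0
      apply Subtype.ext
      have h1 := congrArg Subtype.val h0
      rw [hcoe y] at h1
      exact h1
    · rintro ⟨z, hz⟩
      rw [IntermediateField.mem_adjoin_iff] at hz
      obtain ⟨r, s', hrs⟩ := hz
      have hrv' : MvPolynomial.aeval (Subtype.val : S → E) r ∈
          Algebra.adjoin F (Set.range (Subtype.val : S → E)) := by
        rw [Algebra.adjoin_range_eq_range_aeval]; exact ⟨r, rfl⟩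
      have hrv : MvPolynomial.aeval (Subtype.val : S → E) r ∈ Algebra.adjoin F S := by
        rwa [Subtype.range_coe] at hrv'
      have hsv' : MvPolynomial.aeval (Subtype.val : S → E) s' ∈
          Algebra.adjoin F (Set.range (Subtype.val : S → E)) := by
        rw [Algebra.adjoin_range_eq_range_aeval]; exact ⟨s', rfl⟩
      have hsv : MvPolynomial.aeval (Subtype.val : S → E) s' ∈ Algebra.adjoin F S := by
        rwa [Subtype.range_coe] at hsv'
      by_cases h0 : MvPolynomial.aeval (Subtype.val : S → E) s' = 0
      · refine ⟨⟨0, 1⟩, ?_⟩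
        have hz0 : (z : E) = 0 := by rw [hrs, h0, div_zero]
        apply Subtype.ext
        rw [hcoe]
        push_cast
        simp [hz0]
      · refine ⟨⟨⟨_, hrv⟩, ⟨⟨_, hsv⟩, mem_nonZeroDivisors_of_ne_zero ?_⟩⟩, ?_⟩
        · intro hc
          exact h0 (congrArg Subtype.val hc)
        · apply Subtype.ext
          push_cast
          rw [hcoe, hcoe]
          show (z : E) * _ = _
          rw [hrs, div_mul_cancel₀ _ h0]
    · rintro x y h
      refine ⟨1, ?_⟩
      have h1 := congrArg Subtype.val h
      rw [hcoe, hcoe] at h1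
      rw [show x = y from Subtype.ext h1]
  exact IsFractionRing.isAlgebraic_iff (Algebra.adjoin F S) (IntermediateField.adjoin F S) E

/-- Algebraicity over an adjoin descends to a finite subset. -/
theorem myFinsetAlg {F E : Type*} [Field F] [Field E] [Algebra F E] {S : Set E} {x : E}
    (h : IsAlgebraic (IntermediateField.adjoin F S) x) :
    ∃ u : Finset E, ↑u ⊆ S ∧ IsAlgebraic (IntermediateField.adjoin F (↑u : Set E)) x := by
  classical
  obtain ⟨p, hp0, hpx⟩ := h
  set P := p.map (algebraMap (IntermediateField.adjoin F S) E) with hP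
  have hPne : P ≠ 0 := fun h0 => hp0 (Polynomial.map_eq_zero_iff (algebraMap (IntermediateField.adjoin F S) E).injective |>.1 h0)
  have hc : ∀ n, ∃ u : Finset E, ↑u ⊆ S ∧ P.coeff n ∈ IntermediateField.adjoin F (↑u : Set E) := by
    intro n
    have hmem : P.coeff n ∈ IntermediateField.adjoin F S := by
      rw [hP, Polynomial.coeff_map]; exact (p.coeff n).2
    exact IntermediateField.exists_finset_of_mem_adjoin hmem
  choose f hf1 hf2 using hc
  refine ⟨P.support.biUnion f, ?_, ?_⟩
  · intro y hy
    rcases Finset.mem_biUnion.1 hy with ⟨n, _, hn⟩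
    exact hf1 n hn
  set u : Finset E := P.support.biUnion f with hu
  set N' := IntermediateField.adjoin F (↑u : Set E) with hN'
  have hcoe : ∀ n, P.coeff n ∈ N' := by
    intro n
    by_cases hn : n ∈ P.support
    · exact myAdjoinMono F
        (by exact_mod_cast Finset.coe_subset.2 (Finset.subset_biUnion_of_mem f hn)) (hf2 n)
    · rw [Polynomial.notMem_support_iff.1 hn]; exact zero_mem _
  set q : Polynomial N' := ∑ n ∈ P.support, Polynomial.monomial n (⟨P.coeff n, hcoe n⟩ : N') with hq
  have hqmap : q.map (algebraMap N' E) = P := by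
    rw [hq, Polynomial.map_sum]
    simp only [Polynomial.map_monomial]
    exact (P.as_sum_support).symm
  refine ⟨q, fun h0 => hPne (by rw [← hqmap, h0, Polynomial.map_zero]), ?_⟩
  have : Polynomial.aeval x q = (q.map (algebraMap N' E)).eval x := by
    rw [Polynomial.aeval_def, Polynomial.eval_map]
  rw [this, hqmap, hP, Polynomial.eval_map, ← Polynomial.aeval_def]
  exact hpx

/-- Inserting an element transcendental over the adjoin preserves algebraic independence. -/
theorem myInsert {F E : Type*} [Field F] [Field E] [Algebra F E] {s : Set E}
    (hs : AlgebraicIndependent F ((↑) : s → E)) {t : E}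
    (ht : Transcendental (Algebra.adjoin F s) t) :
    AlgebraicIndependent F ((↑) : ↥(insert t s) → E) := by
  classical
  have hts : t ∉ s := fun hmem =>
    ht (isAlgebraic_algebraMap (⟨t, Algebra.subset_adjoin hmem⟩ : Algebra.adjoin F s))
  have h1 : AlgebraicIndependent F (fun o : Option s => o.elim t (↑)) :=
    (Subtype.range_coe ▸ hs.option_iff_transcendental t).2 ht
  convert h1.comp _ (Set.subtypeInsertEquivOption hts).injective
  ext x
  by_cases h : ↑x = t <;> simp [h, Set.subtypeInsertEquivOption]

/-- Converse: an element of an algebraically independent insert is transcendental over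
the adjoin of the rest. -/
theorem myTranscendental {F E : Type*} [Field F] [Field E] [Algebra F E] {s : Set E} {t : E}
    (hts : t ∉ s) (h : AlgebraicIndependent F ((↑) : ↥(insert t s) → E)) :
    Transcendental (Algebra.adjoin F s) t := by
  classical
  have hs : AlgebraicIndependent F ((↑) : s → E) := h.mono (Set.subset_insert t s)
  refine (Subtype.range_coe ▸ hs.option_iff_transcendental t).1 ?_
  have h2 := h.comp (Set.subtypeInsertEquivOption hts).symm (Equiv.injective _)
  convert h2 using 1
  funext o
  cases o with
  | none => simp [Set.subtypeInsertEquivOption]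
  | some x => simp [Set.subtypeInsertEquivOption]

/-- The key step: a finite algebraically independent set can be enlarged by an element of
any nonempty open interval, provided there is an infinite transcendence basis. -/
theorem myStep {K : Type*} [Field K] [LinearOrder K] [IsStrictOrderedRing K] {b : Set K}
    (hb : IsTranscendenceBasis ℚ ((↑) : b → K)) (hbi : b.Infinite)
    {s : Set K} (hsf : s.Finite) (hs : AlgebraicIndependent ℚ ((↑) : s → K))
    {a c : K} (hac : a < c) :
    ∃ t : K, a < t ∧ t < c ∧ AlgebraicIndependent ℚ ((↑) : ↥(insert t s) → K) := by
  classical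
  have halgK : ∀ x : K, IsAlgebraic (IntermediateField.adjoin ℚ b) x := by
    have h := hb.isAlgebraic_field
    rw [Subtype.range_coe] at h
    exact fun x => h.isAlgebraic x
  have hfin : ∀ x : K, ∃ u : Finset K,
      ↑u ⊆ b ∧ IsAlgebraic (IntermediateField.adjoin ℚ (↑u : Set K)) x :=
    fun x => myFinsetAlg (halgK x)
  choose w hw1 hw2 using hfin
  set g : Finset K := insert a (insert c hsf.toFinset) with hg
  set u : Finset K := g.biUnion w with hu
  have hub : ↑u ⊆ b := by
    intro y hy
    rcases Finset.mem_biUnion.1 (by exact_mod_cast hy) with ⟨z, _, hz⟩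
    exact hw1 z hz
  set N := IntermediateField.adjoin ℚ (↑u : Set K) with hN
  have hgalg : ∀ x ∈ g, IsAlgebraic N x := by
    intro x hx
    refine myIsAlgebraic_mono (myAdjoinMono ℚ ?_) (hw2 x)
    exact_mod_cast Finset.coe_subset.2 (Finset.subset_biUnion_of_mem w hx)
  obtain ⟨β, hβmem⟩ := (hbi.diff u.finite_toSet).nonempty
  obtain ⟨hβb, hβu⟩ := hβmem
  have hβtrans : Transcendental N β := by
    intro hcontra
    have h2 : IsAlgebraic (Algebra.adjoin ℚ (↑u : Set K)) β := (myBridge _ _).2 hcontra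
    exact myTranscendental hβu (hb.1.mono (Set.insert_subset hβb hub)) h2
  set L := IntermediateField.adjoin N ((↑g : Set K)) with hL
  haveI hNL : Algebra.IsAlgebraic N L :=
    IntermediateField.isAlgebraic_adjoin (fun x hx => (hgalg x hx).isIntegral)
  have hβL : Transcendental L β := by
    intro hcontra
    haveI : Algebra.IsIntegral N L := Algebra.isAlgebraic_iff_isIntegral.mp hNL
    exact hβtrans (isIntegral_trans (A := L) β hcontra.isIntegral).isAlgebraic
  have haL : a ∈ L := IntermediateField.subset_adjoin N _ (by simp [hg])
  have hcL : c ∈ L := IntermediateField.subset_adjoin N _ (by simp [hg])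
  have hsL : s ⊆ (L : Set K) := by
    intro y hy
    refine IntermediateField.subset_adjoin (↥N) _ ?_
    simp only [hg, Finset.coe_insert, Set.mem_insert_iff, Finset.mem_coe,
      Set.Finite.mem_toFinset, hsf.mem_toFinset]
    exact Or.inr (Or.inr hy)
  have hβsq : (0:K) < 2 + β^2 := by positivity
  have h1lt : (1:K) < 2 + β^2 := by nlinarith [sq_nonneg β]
  set t : K := a + (c - a)/(2 + β^2) with ht
  have hca : (0:K) < c - a := sub_pos.2 hac
  have hta : a < t := by
    rw [ht]
    have : 0 < (c - a)/(2 + β^2) := div_pos hca hβsq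
    linarith
  have htc : t < c := by
    have : (c - a)/(2 + β^2) < c - a := div_lt_self hca h1lt
    rw [ht]; linarith
  have hkey : (t - a) * β^2 + (2*t - a - c) = 0 := by
    rw [ht]; field_simp; ring
  refine ⟨t, hta, htc, ?_⟩
  refine myInsert hs ?_
  intro hcontra
  -- `t` is algebraic over `L`.
  have hsub : ∀ z : K, z ∈ Algebra.adjoin ℚ s → z ∈ L := by
    intro z hz
    have hle : Algebra.adjoin ℚ s ≤ Subalgebra.restrictScalars ℚ L.toSubalgebra :=
      Algebra.adjoin_le (fun y hy => hsL hy)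
    exact hle hz
  have htL : IsAlgebraic L t := by
    refine myIsAlgebraic_of_ringHom (E := K)
      (⟨⟨⟨fun z => ⟨z.1, hsub z.1 z.2⟩, rfl⟩, fun _ _ => rfl⟩, rfl, fun _ _ => rfl⟩ :
        Algebra.adjoin ℚ s →+* L) (fun x y hxy => ?_) (fun _ => rfl) hcontra
    exact Subtype.ext (congrArg (fun z : ↥L => (z : K)) hxy)
  -- `β` is algebraic over `L⟮t⟯`, hence over `L`: contradiction.
  set Lt := IntermediateField.adjoin L ({t} : Set K) with hLt
  haveI hLLt : Algebra.IsAlgebraic L Lt := by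
    refine IntermediateField.isAlgebraic_adjoin ?_
    rintro x hx
    rcases Set.mem_singleton_iff.1 hx with rfl
    exact htL.isIntegral
  have htmem : t ∈ Lt := IntermediateField.subset_adjoin L _ rfl
  have hamem : a ∈ Lt := Lt.algebraMap_mem ⟨a, haL⟩
  have hcmem : c ∈ Lt := Lt.algebraMap_mem ⟨c, hcL⟩
  have h2t : (2*t : K) ∈ Lt := by
    have := add_mem htmem htmem
    rwa [← two_mul] at this
  have hβLt : IsAlgebraic Lt β := by
    set x : Lt := ⟨t - a, sub_mem htmem hamem⟩ with hx
    set y : Lt := ⟨2*t - a - c, sub_mem (sub_mem h2t hamem) hcmem⟩ with hy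
    refine ⟨Polynomial.C x * Polynomial.X^2 + Polynomial.C y, ?_, ?_⟩
    · intro h0
      have hc2 : (Polynomial.C x * Polynomial.X^2 + Polynomial.C y).coeff 2 = x := by
        rw [Polynomial.coeff_add, Polynomial.coeff_C_mul, Polynomial.coeff_X_pow,
          Polynomial.coeff_C]
        norm_num
      rw [h0, Polynomial.coeff_zero] at hc2
      have hx0 : (t - a : K) = 0 := by
        have := congrArg Subtype.val hc2.symm
        simpa [hx] using this
      rw [sub_eq_zero] at hx0
      exact absurd hx0 (ne_of_gt hta)
    · rw [map_add, map_mul, Polynomial.aeval_C, map_pow, Polynomial.aeval_X,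
        Polynomial.aeval_C]
      show (t - a : K) * β^2 + (2*t - a - c) = 0
      exact hkey
  haveI : Algebra.IsIntegral L Lt := Algebra.isAlgebraic_iff_isIntegral.mp hLLt
  exact hβL (isIntegral_trans (A := Lt) β hβLt.isIntegral).isAlgebraic

/-- Let `(K,<)` be a countable ordered field whose transcendence degree over `ℚ` is countably
infinite. Then `K` admits a transcendence basis over `ℚ` that is dense in `K` for the order
topology. -/
theorem stmt_15 {K : Type*} [Field K] [LinearOrder K] [IsStrictOrderedRing K] [Countable K]
    (htd : ∃ b : Set K, IsTranscendenceBasis ℚ ((↑) : b → K) ∧ b.Countable ∧ b.Infinite) :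
    ∃ T : Set K, IsTranscendenceBasis ℚ ((↑) : T → K) ∧
      ∀ a b : K, a < b → ∃ t ∈ T, a < t ∧ t < b := by
  classical
  obtain ⟨b, hb, _, hbi⟩ := htd
  obtain ⟨e, he⟩ := exists_surjective_nat (K × K)
  have key : ∀ s : Set K, s.Finite → AlgebraicIndependent ℚ ((↑) : s → K) → ∀ a c : K,
      ∃ t : K, (a < c → a < t ∧ t < c) ∧
        AlgebraicIndependent ℚ ((↑) : ↥(insert t s) → K) := by
    intro s hsf hsi a c
    by_cases h : a < c
    · obtain ⟨t, h1, h2, h3⟩ := myStep hb hbi hsf hsi h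
      exact ⟨t, fun _ => ⟨h1, h2⟩, h3⟩
    · obtain ⟨t, _, _, h3⟩ := myStep hb hbi hsf hsi (show (0:K) < 1 from one_pos)
      exact ⟨t, fun hc => absurd hc h, h3⟩
  choose pick hpick1 hpick2 using key
  let F : ℕ → {s : Set K // s.Finite ∧ AlgebraicIndependent ℚ ((↑) : s → K)} :=
    fun n => Nat.rec
      ⟨∅, Set.finite_empty, algebraicIndependent_empty⟩
      (fun n p => ⟨insert (pick p.1 p.2.1 p.2.2 (e n).1 (e n).2) p.1,
        p.2.1.insert _, hpick2 p.1 p.2.1 p.2.2 (e n).1 (e n).2⟩) n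
  have hFsucc : ∀ n, (F (n+1)).1 = insert (pick (F n).1 (F n).2.1 (F n).2.2 (e n).1 (e n).2)
      (F n).1 := fun n => rfl
  have hFmono : ∀ m n, m ≤ n → (F m).1 ⊆ (F n).1 := by
    intro m n h
    induction n with
    | zero => rw [Nat.le_zero.1 h]
    | succ n ih =>
      rcases Nat.lt_or_ge m (n+1) with h' | h'
      · exact (ih (Nat.lt_succ_iff.1 h')).trans (by rw [hFsucc]; exact Set.subset_insert _ _)
      · rw [Nat.le_antisymm h h']
  set U : Set K := ⋃ n, (F n).1 with hU
  have hUind : AlgebraicIndependent ℚ ((↑) : U → K) := by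
    apply algebraicIndependent_iUnion_of_directed
    · intro m n
      exact ⟨max m n, hFmono m _ (le_max_left _ _), hFmono n _ (le_max_right _ _)⟩
    · exact fun n => (F n).2.2
  obtain ⟨T, hUT, hTmax⟩ :=
    exists_maximal_algebraicIndependent U Set.univ (Set.subset_univ _) hUind
  refine ⟨T, ⟨hTmax.1.1, fun t ht hst => ?_⟩, ?_⟩
  · simp only [Subtype.range_coe_subtype, Set.setOf_mem_eq] at *
    exact hTmax.eq_of_le ⟨ht, Set.subset_univ _⟩ hst
  · intro a c hac
    obtain ⟨n, hn⟩ := he (a, c)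
    have hbd := hpick1 (F n).1 (F n).2.1 (F n).2.2 (e n).1 (e n).2
    have hmem : pick (F n).1 (F n).2.1 (F n).2.2 (e n).1 (e n).2 ∈ U :=
      Set.mem_iUnion.2 ⟨n+1, by rw [hFsucc]; exact Set.mem_insert _ _⟩
    rw [hn] at hbd hmem
    exact ⟨_, hUT hmem, (hbd hac).1, (hbd hac).2⟩
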